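/- arXiv:0903.4336 — 4 statements merged into one kernel-verified Lean document; each statement's English description precedes it below -/
import Mathlib

section
/- Let N be a finite group, L a normal subgroup of N, and χ an irreducible (complex) character of L. If the quotient I_N(χ)/L of the inertia group of χ in N by L is cyclic, then χ extends to an irreducible character of I_N(χ). -/
open CategoryTheory

noncomputable section

/-- `χ` is the character of some irreducible (simple) finite-dimensional complex
representation of `G`. -/
def IsIrrChar {G : Type} [Group G] (χ : G → ℂ) : Prop :=
  ∃ V : FDRep ℂ G, Simple V ∧ V.character = χ

open Classical in
/-- Extension of a function defined on a subgroup to the whole group by a default value. -/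
noncomputable def extFun {N : Type*} [Group N] {M : Type*} (T : Subgroup N)
    (χ : ↥T → M) (d : M) : N → M :=
  fun x => if h : x ∈ T then χ ⟨x, h⟩ else d

/-- The inertia group `I_N(χ) = {n : N | χ^n = χ}` of a character `χ` of a normal
subgroup `T` of `N`, where `χ^n (t) = χ (n * t * n⁻¹)`. -/
def inertia {N : Type*} [Group N] {M : Type*} (T : Subgroup N) (hT : T.Normal)
    (χ : ↥T → M) (d : M) : Subgroup N where
  carrier := {n | ∀ t ∈ T, extFun T χ d (n * t * n⁻¹) = extFun T χ d t}
  one_mem' := by intro t ht; simp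
  mul_mem' := by
    intro a b ha hb t ht
    have h1 : a * b * t * (a * b)⁻¹ = a * (b * t * b⁻¹) * a⁻¹ := by group
    rw [h1, ha _ (hT.conj_mem t ht b), hb t ht]
  inv_mem' := by
    intro a ha t ht
    rw [inv_inv]
    have h2 : a * (a⁻¹ * t * a) * a⁻¹ = t := by group
    have h3 := ha _ (by simpa using hT.conj_mem t ht a⁻¹)
    rw [h2] at h3
    exact h3.symm

/-- The usual inner product of class functions on a finite group. -/
noncomputable def charInner (G : Type*) [Group G] (φ ψ : G → ℂ) : ℂ :=
  (Nat.card G : ℂ)⁻¹ * ∑ᶠ g, φ g * (starRingEnd ℂ) (ψ g)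

/-- The conjugate character `χ^n` on a normal subgroup: `χ^n (x) = χ (n * x * n⁻¹)`. -/
def conjChar {N : Type*} [Group N] {M : Type*} (L : Subgroup N) (hL : L.Normal)
    (n : N) (χ : ↥L → M) : ↥L → M :=
  fun x => χ ⟨n * x * n⁻¹, hL.conj_mem x x.2 n⟩

lemma simple_of_res' {G H : Type} [Group G] [Group H] (f : G →* H) (X : FDRep ℂ H)
    (h : Simple ((Action.res (FGModuleCat ℂ) f).obj X)) : Simple X := by
  set F := Action.res (FGModuleCat ℂ) f with hF
  constructor
  intro Y g hg
  constructor
  · intro hiso h0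
    have hY : 𝟙 Y = 0 := by
      apply (cancel_mono g).mp
      rw [Category.id_comp, h0, Limits.zero_comp]
    have hinv : inv g = 0 := by
      rw [← Category.comp_id (inv g), hY, Limits.comp_zero]
    have : 𝟙 X = 0 := by
      rw [← IsIso.inv_hom_id g, hinv, Limits.zero_comp]
    have h2 : 𝟙 (F.obj X) = 0 := by
      rw [← F.map_id, this, F.map_zero]
    exact CategoryTheory.id_nonzero (F.obj X) h2
  · intro h0
    have hgh : g.hom ≠ 0 := by
      intro hh; exact h0 (by ext : 1; exact hh)
    have m1 : Mono ((Action.forget (FGModuleCat ℂ) H).map g) :=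
      inferInstance
    have m2 : Mono (F.map g) := by
      apply (Action.forget (FGModuleCat ℂ) G).mono_of_mono_map
      exact m1
    have hFg : F.map g ≠ 0 := by
      intro hh
      exact hgh (congrArg Action.Hom.hom hh)
    have h3 : IsIso (F.map g) := (h.mono_isIso_iff_nonzero (F.map g)).mpr hFg
    have h4 : IsIso (F.map g).hom :=
      (Action.forget (FGModuleCat ℂ) G).map_isIso (F.map g)
    have h5 : IsIso g.hom := h4
    exact Action.isIso_of_hom_isIso g

lemma iso_of_char_eq' {G : Type} [Group G] [Finite G] (X Y : FDRep ℂ G) [Simple X] [Simple Y]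
    (h : X.character = Y.character) : Nonempty (X ≅ Y) := by
  letI fG : Fintype G := Fintype.ofFinite G
  haveI hi : Invertible ((@Fintype.card G fG : ℂ)) :=
    invertibleOfNonzero (Nat.cast_ne_zero.mpr (@Fintype.card_ne_zero G fG ⟨1⟩))
  have h1 := FDRep.char_orthonormal X Y
  have h2 := FDRep.char_orthonormal X X
  rw [if_pos ⟨Iso.refl X⟩] at h2
  rw [← h] at h1
  rw [h2] at h1
  by_contra hne
  rw [if_neg (by exact fun ⟨i⟩ => hne ⟨i⟩)] at h1
  norm_num at h1

lemma schur_commutant {G : Type} [Group G] (X : FDRep ℂ G) [Simple X] (φ : X →ₗ[ℂ] X)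
    (hφ : ∀ g : G, φ ∘ₗ X.ρ g = X.ρ g ∘ₗ φ) : ∃ c : ℂ, φ = c • LinearMap.id := by
  have h : ∃ c : ℂ, c • 𝟙 X =
      (⟨FGModuleCat.ofHom φ, fun g => by ext v; exact congrFun (congrArg _ (hφ g)) v⟩ : X ⟶ X) :=
    CategoryTheory.endomorphism_simple_eq_smul_id ℂ _
  obtain ⟨c, hc⟩ := h
  exact ⟨c, by ext v; exact (congrArg (fun (f : X ⟶ X) => f.hom v) hc).symm⟩

lemma conj_zpow_aux {Γ : Type*} [Group Γ] {L' : Type*} [Group L'] (ρ : L' →* Γ)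
    (u : Γ) (cc : ℤ → L' → L')
    (hcc1 : ∀ x, u * ρ x = ρ (cc 1 x) * u)
    (hcc0 : ∀ x, cc 0 x = x)
    (hadd : ∀ a b x, cc a (cc b x) = cc (a + b) x) :
    ∀ (d : ℤ) (x : L'), u ^ d * ρ x = ρ (cc d x) * u ^ d := by
  have hneg : ∀ x, u⁻¹ * ρ x = ρ (cc (-1) x) * u⁻¹ := by
    intro x
    have h := hcc1 (cc (-1) x)
    rw [hadd 1 (-1) x] at h
    norm_num at h
    rw [hcc0] at h
    calc u⁻¹ * ρ x = u⁻¹ * (ρ x * u) * u⁻¹ := by group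
      _ = u⁻¹ * (u * ρ (cc (-1) x)) * u⁻¹ := by rw [h]
      _ = ρ (cc (-1) x) * u⁻¹ := by group
  intro d
  induction d using Int.induction_on with
  | zero => intro x; rw [hcc0]; group
  | succ k ih =>
    intro x
    have h1 : u ^ ((k : ℤ) + 1) = u ^ (k : ℤ) * u := by rw [zpow_add_one]
    rw [h1, mul_assoc, hcc1 x, ← mul_assoc, ih, hadd, mul_assoc]
  | pred k ih =>
    intro x
    have h1 : u ^ (-(k : ℤ) - 1) = u ^ (-(k : ℤ)) * u⁻¹ := by rw [zpow_sub_one]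
    rw [h1, mul_assoc, hneg x, ← mul_assoc, ih, hadd, mul_assoc]
    have e : (-(k : ℤ)) + -1 = -(k : ℤ) - 1 := by ring
    rw [e]

set_option maxHeartbeats 2000000 in
/-- If `L ◁ N` are finite groups, `χ ∈ Irr(L)`, and `I_N(χ)/L` is cyclic,
then `χ` extends to an irreducible character of `I_N(χ)`. -/
theorem stmt0 {N : Type} [Group N] [Finite N] (L : Subgroup N) [hL : L.Normal]
    (χ : ↥L → ℂ) (hχ : IsIrrChar χ)
    (hcyc : IsCyclic (↥(inertia L hL χ 0) ⧸ L.subgroupOf (inertia L hL χ 0))) :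
    ∃ χ' : ↥(inertia L hL χ 0) → ℂ, IsIrrChar χ' ∧
      ∀ (x : N) (hx : x ∈ L) (hx' : x ∈ inertia L hL χ 0),
        χ' ⟨x, hx'⟩ = χ ⟨x, hx⟩ := by
  obtain ⟨V, hV, hVchar⟩ := hχ
  classical
  set T := inertia L hL χ 0 with hT
  -- L ≤ T
  have hLT : L ≤ T := by
    intro n hn t ht
    have h1 : n * t * n⁻¹ ∈ L := hL.conj_mem t ht n
    simp only [extFun, dif_pos h1, dif_pos ht]
    have h2 := FDRep.char_conj V (⟨t, ht⟩ : ↥L) (⟨n, hn⟩ : ↥L)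
    rw [hVchar] at h2
    have h3 : (⟨n * t * n⁻¹, h1⟩ : ↥L) = ⟨n, hn⟩ * ⟨t, ht⟩ * ⟨n, hn⟩⁻¹ := by
      ext; rfl
    rw [h3]; exact h2
  obtain ⟨gen, hgen⟩ := hcyc.exists_generator
  obtain ⟨τ, hτ⟩ := QuotientGroup.mk'_surjective (L.subgroupOf T) gen
  set m := orderOf gen with hmdef
  have hm : 0 < m := orderOf_pos gen
  have hmem : ∀ d : ℤ, ((τ : N) ^ d ∈ L) ↔ ((m : ℤ) ∣ d) := by
    intro d
    have e1 : ((τ : N) ^ d ∈ L) ↔ (τ ^ d ∈ L.subgroupOf T) := by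
      rw [Subgroup.mem_subgroupOf]
      norm_cast
    rw [e1, ← QuotientGroup.eq_one_iff (τ ^ d : ↥T)]
    have e2 : ((τ ^ d : ↥T) : ↥T ⧸ L.subgroupOf T) = gen ^ d := by
      rw [← hτ]
      push_cast
      rfl
    rw [e2, orderOf_dvd_iff_zpow_eq_one]
  have hk : ∀ t : ↥T, ∃ d : ℤ, gen ^ d = QuotientGroup.mk' (L.subgroupOf T) t :=
    fun t => Subgroup.mem_zpowers_iff.mp (hgen _)
  set kf : ↥T → ℤ := fun t => (hk t).choose with hkf_def
  have hkf : ∀ t, gen ^ (kf t) = QuotientGroup.mk' (L.subgroupOf T) t :=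
    fun t => (hk t).choose_spec
  have amem : ∀ t : ↥T, ((t : N) * (τ : N) ^ (-(kf t)) ∈ L) := by
    intro t
    have h1 : (t * τ ^ (-(kf t)) : ↥T) ∈ L.subgroupOf T := by
      apply (QuotientGroup.eq_one_iff _).mp
      show (QuotientGroup.mk' (L.subgroupOf T)) (t * τ ^ (-(kf t))) = 1
      rw [map_mul, map_zpow, hτ, ← hkf t, zpow_neg, mul_inv_cancel]
    have := Subgroup.mem_subgroupOf.mp h1
    simpa using this
  -- conjugation maps
  set cc : ℤ → ↥L → ↥L := fun d x => ⟨(τ : N) ^ d * x * ((τ : N) ^ d)⁻¹,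
    hL.conj_mem _ x.2 _⟩ with hccdef
  have hcc0 : ∀ x, cc 0 x = x := by
    intro x; ext; simp [hccdef]
  have hadd : ∀ a b x, cc a (cc b x) = cc (a + b) x := by
    intro a b x; ext
    show (τ:N)^a * ((τ:N)^b * x * ((τ:N)^b)⁻¹) * ((τ:N)^a)⁻¹
      = (τ:N)^(a+b) * x * ((τ:N)^(a+b))⁻¹
    rw [zpow_add]
    group
  have hccmul : ∀ (d : ℤ) (x y : ↥L), cc d (x * y) = cc d x * cc d y := by
    intro d x y; ext
    show (τ:N)^d * ((x:N) * y) * ((τ:N)^d)⁻¹ = _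
    push_cast [hccdef]
    group
  set cH : ↥L →* ↥L := MonoidHom.mk' (cc 1) (hccmul 1) with hcH
  set cInv : ↥L →* ↥L := MonoidHom.mk' (cc (-1)) (hccmul (-1)) with hcInv
  set Vτ : FDRep ℂ ↥L := FDRep.of (V.ρ.comp cH) with hVτ
  -- character of Vτ
  have hinert : ∀ x : ↥L, χ (cc 1 x) = χ x := by
    intro x
    have h := τ.2 (x : N) x.2
    simp only [extFun, dif_pos (hL.conj_mem (x:N) x.2 (τ:N)), dif_pos x.2] at h
    have e1 : cc 1 x = ⟨(τ:N) * x * (τ:N)⁻¹, hL.conj_mem (x:N) x.2 (τ:N)⟩ := by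
      ext; show (τ:N)^(1:ℤ) * x * ((τ:N)^(1:ℤ))⁻¹ = _; rw [zpow_one]
    rw [e1, h]
  have hVτchar : Vτ.character = χ := by
    funext x
    have e0 : Vτ.character x = V.character (cH x) := rfl
    rw [e0, hVchar]
    exact hinert x
  haveI : Simple V := hV
  haveI hVτsimple : Simple Vτ := by
    apply simple_of_res' cInv
    show Simple (FDRep.of ((V.ρ.comp cH).comp cInv))
    have hci : (V.ρ.comp cH).comp cInv = V.ρ := by
      apply MonoidHom.ext; intro x
      show V.ρ (cc 1 (cc (-1) x)) = V.ρ x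
      rw [hadd]
      norm_num
      rw [hcc0]
    rw [hci]
    exact hV
  obtain ⟨i⟩ := iso_of_char_eq' V Vτ (by rw [hVchar, hVτchar])
  have hA : ∀ (x : ↥L) (v : ↥V), V.ρ (cc 1 x) (FDRep.isoToLinearEquiv i v)
      = FDRep.isoToLinearEquiv i (V.ρ x v) := by
    intro x v
    have h := FDRep.Iso.conj_ρ i x
    have h2 : Vτ.ρ x (FDRep.isoToLinearEquiv i v)
        = ((FDRep.isoToLinearEquiv i).conj (V.ρ x)) (FDRep.isoToLinearEquiv i v) := by rw [← h]
    rw [LinearEquiv.conj_apply] at h2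
    simp only [LinearMap.comp_apply, LinearEquiv.coe_coe, LinearEquiv.symm_apply_apply] at h2
    exact h2
  set u : (↥V →ₗ[ℂ] ↥V)ˣ := ⟨(FDRep.isoToLinearEquiv i).toLinearMap,
    (FDRep.isoToLinearEquiv i).symm.toLinearMap,
    by ext v; exact (FDRep.isoToLinearEquiv i).apply_symm_apply v,
    by ext v; exact (FDRep.isoToLinearEquiv i).symm_apply_apply v⟩ with hu_def
  set ρu := Representation.asGroupHom V.ρ with hρu
  have hcc1 : ∀ x : ↥L, u * ρu x = ρu (cc 1 x) * u := by
    intro x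
    apply Units.ext
    rw [Units.val_mul, Units.val_mul, hρu, Representation.asGroupHom_apply,
      Representation.asGroupHom_apply]
    ext v
    simp only [Module.End.mul_apply]
    exact (hA x v).symm
  have hconj := conj_zpow_aux ρu u cc hcc1 hcc0 hadd
  set lτ : ↥L := ⟨(τ : N) ^ (m : ℤ), (hmem _).mpr dvd_rfl⟩ with hlτ
  set su : (↥V →ₗ[ℂ] ↥V)ˣ := u ^ (m : ℤ) * (ρu lτ)⁻¹ with hsu
  have hsucomm : ∀ x : ↥L, su * ρu x = ρu x * su := by
    intro x
    have e1 : (ρu lτ)⁻¹ * ρu x = ρu (lτ⁻¹ * x * lτ) * (ρu lτ)⁻¹ := by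
      rw [map_mul, map_mul, map_inv]
      group
    have e2 : cc (m : ℤ) (lτ⁻¹ * x * lτ) = x := by
      ext
      show (τ:N)^(m:ℤ) * (((lτ⁻¹ * x * lτ : ↥L)) : N) * ((τ:N)^(m:ℤ))⁻¹ = (x:N)
      rw [show (((lτ⁻¹ * x * lτ : ↥L)) : N)
        = ((τ:N)^(m:ℤ))⁻¹ * (x:N) * (τ:N)^(m:ℤ) from rfl]
      group
    calc su * ρu x = u ^ (m:ℤ) * ((ρu lτ)⁻¹ * ρu x) := by rw [hsu, mul_assoc]
      _ = u ^ (m:ℤ) * (ρu (lτ⁻¹ * x * lτ) * (ρu lτ)⁻¹) := by rw [e1]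
      _ = (u ^ (m:ℤ) * ρu (lτ⁻¹ * x * lτ)) * (ρu lτ)⁻¹ := by group
      _ = (ρu (cc (m:ℤ) (lτ⁻¹ * x * lτ)) * u ^ (m:ℤ)) * (ρu lτ)⁻¹ := by rw [hconj]
      _ = ρu x * su := by rw [e2, hsu, mul_assoc]
  obtain ⟨c, hc⟩ := schur_commutant V (su.val) (by
    intro g
    have := congrArg Units.val (hsucomm g)
    rw [Units.val_mul, Units.val_mul, hρu, Representation.asGroupHom_apply] at this
    exact this)
  have hidnz : (LinearMap.id : ↥V →ₗ[ℂ] ↥V) ≠ 0 := by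
    intro h0
    apply CategoryTheory.id_nonzero V
    ext : 2
    exact h0
  have hcnz : c ≠ 0 := by
    intro h0
    rw [h0, zero_smul] at hc
    have h1 : (su.val * su.inv : ↥V →ₗ[ℂ] ↥V) = 1 := su.val_inv
    rw [hc, zero_mul] at h1
    apply hidnz
    calc (LinearMap.id : ↥V →ₗ[ℂ] ↥V) = 1 := rfl
      _ = 0 := h1.symm
  obtain ⟨ω, hω⟩ := IsAlgClosed.exists_pow_nat_eq (k := ℂ) c⁻¹ hm
  have hωnz : ω ≠ 0 := by
    intro h0
    rw [h0, zero_pow hm.ne'] at hω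
    exact hcnz (inv_eq_zero.mp hω.symm)
  set w : (↥V →ₗ[ℂ] ↥V)ˣ := ⟨ω • u.val, ω⁻¹ • u.inv,
    by rw [smul_mul_smul_comm, u.val_inv, mul_inv_cancel₀ hωnz, one_smul],
    by rw [smul_mul_smul_comm, u.inv_val, inv_mul_cancel₀ hωnz, one_smul]⟩ with hw_def
  have hw1 : ∀ x : ↥L, w * ρu x = ρu (cc 1 x) * w := by
    intro x
    apply Units.ext
    rw [Units.val_mul, Units.val_mul]
    show (ω • u.val) * (ρu x).val = (ρu (cc 1 x)).val * (ω • u.val)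
    rw [smul_mul_assoc, mul_smul_comm]
    congr 1
    have := congrArg Units.val (hcc1 x)
    rw [Units.val_mul, Units.val_mul] at this
    exact this
  have hwconj := conj_zpow_aux ρu w cc hw1 hcc0 hadd
  have hum : (u ^ (m:ℤ)).val = c • (ρu lτ).val := by
    have : u ^ (m:ℤ) = su * ρu lτ := by rw [hsu, inv_mul_cancel_right]
    rw [this, Units.val_mul, hc]
    ext v
    simp
  have hwm : w ^ (m : ℤ) = ρu lτ := by
    apply Units.ext
    have e1 : (w ^ (m:ℤ)).val = (w.val) ^ (m:ℕ) := by
      rw [zpow_natCast]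
      rfl
    rw [e1]
    show (ω • u.val) ^ (m:ℕ) = (ρu lτ).val
    rw [smul_pow, hω]
    have e2 : (u.val) ^ (m:ℕ) = (u ^ (m:ℤ)).val := by
      rw [zpow_natCast]
      rfl
    rw [e2, hum, smul_smul, inv_mul_cancel₀ hcnz, one_smul]
  have hwd : ∀ d : ℤ, ((m:ℤ) ∣ d) → ∀ (hdL : (τ:N)^d ∈ L), w ^ d = ρu ⟨(τ:N)^d, hdL⟩ := by
    intro d hdvd hdL
    obtain ⟨e, rfl⟩ := hdvd
    rw [zpow_mul, hwm, ← map_zpow]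
    congr 1
    ext
    show ((lτ : ↥L) : N) ^ e = (τ:N) ^ ((m:ℤ) * e)
    have : ((lτ : ↥L) : N) = (τ:N)^(m:ℤ) := rfl
    rw [this, ← zpow_mul]
  -- the extension
  set aL : ↥T → ↥L := fun t => ⟨(t : N) * (τ : N) ^ (-(kf t)), amem t⟩ with haL
  set Wf : ↥T → (↥V →ₗ[ℂ] ↥V)ˣ := fun t => ρu (aL t) * w ^ (kf t) with hWf
  have hWmul : ∀ s t : ↥T, Wf (s * t) = Wf s * Wf t := by
    intro s t
    set a := kf s with ha
    set b := kf t with hb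
    set c' := kf (s * t) with hc'
    have hdvd : (m : ℤ) ∣ (a + b - c') := by
      rw [orderOf_dvd_iff_zpow_eq_one]
      rw [zpow_sub, zpow_add, hkf, hkf, hkf, ← map_mul]
      group
    have hEL : (τ : N) ^ (a + b - c') ∈ L := (hmem _).mpr hdvd
    have key : aL s * cc a (aL t) * ⟨(τ:N) ^ (a + b - c'), hEL⟩ = aL (s * t) := by
      ext
      show ((aL s : N) * ((cc a (aL t) : ↥L) : N)) * (τ:N) ^ (a + b - c')
        = ((s * t : ↥T) : N) * (τ:N) ^ (-c')
      rw [show ((aL s : ↥L) : N) = (s : N) * (τ:N) ^ (-a) from rfl,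
        show ((cc a (aL t) : ↥L) : N) = (τ:N)^a * ((t : N) * (τ:N) ^ (-b)) * ((τ:N)^a)⁻¹ from rfl,
        show ((s * t : ↥T) : N) = (s : N) * (t : N) from rfl]
      group
    calc Wf (s * t) = ρu (aL (s * t)) * w ^ c' := rfl
      _ = ρu (aL s * cc a (aL t)) * (ρu ⟨(τ:N) ^ (a + b - c'), hEL⟩ * w ^ c') := by
          rw [← key, map_mul, map_mul]; group
      _ = ρu (aL s * cc a (aL t)) * (w ^ (a + b - c') * w ^ c') := by
          rw [hwd _ hdvd hEL]
      _ = ρu (aL s) * (ρu (cc a (aL t)) * w ^ (a + b)) := by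
          rw [map_mul, ← zpow_add]; group
      _ = ρu (aL s) * (w ^ a * ρu (aL t) * w ^ b) := by
          rw [hwconj a (aL t), zpow_add]; group
      _ = Wf s * Wf t := by rw [hWf]; group; rfl
  set Wmon : ↥T →* (↥V →ₗ[ℂ] ↥V)ˣ := MonoidHom.mk' Wf hWmul with hWmon
  set ρ' : Representation ℂ ↥T ↥V := (Units.coeHom (↥V →ₗ[ℂ] ↥V)).comp Wmon with hρ'
  have hres : ∀ (x : N) (hx : x ∈ L) (hx' : x ∈ T), ρ' ⟨x, hx'⟩ = V.ρ ⟨x, hx⟩ := by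
    intro x hx hx'
    set t : ↥T := ⟨x, hx'⟩ with ht
    have h1 : (m : ℤ) ∣ kf t := by
      rw [orderOf_dvd_iff_zpow_eq_one, hkf]
      exact (QuotientGroup.eq_one_iff t).mpr (Subgroup.mem_subgroupOf.mpr hx)
    have hEL : (τ : N) ^ (kf t) ∈ L := (hmem _).mpr h1
    have h2 : Wf t = ρu (aL t * ⟨(τ:N) ^ (kf t), hEL⟩) := by
      rw [hWf]
      show ρu (aL t) * w ^ (kf t) = _
      rw [hwd _ h1 hEL, ← map_mul]
    have h3 : aL t * ⟨(τ:N) ^ (kf t), hEL⟩ = ⟨x, hx⟩ := by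
      ext
      show ((aL t : ↥L) : N) * (τ:N) ^ (kf t) = x
      rw [show ((aL t : ↥L) : N) = x * (τ:N) ^ (-(kf t)) from rfl]
      group
    show ((Wf t : (↥V →ₗ[ℂ] ↥V)ˣ) : ↥V →ₗ[ℂ] ↥V) = V.ρ ⟨x, hx⟩
    rw [h2, h3, hρu, Representation.asGroupHom_apply]
  refine ⟨(FDRep.of ρ').character, ⟨FDRep.of ρ', ?_, rfl⟩, ?_⟩
  · apply simple_of_res' (Subgroup.inclusion hLT)
    show Simple (FDRep.of (ρ'.comp (Subgroup.inclusion hLT)))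
    have he : ρ'.comp (Subgroup.inclusion hLT) = V.ρ := by
      apply MonoidHom.ext
      intro x
      exact hres (x : N) x.2 (hLT x.2)
    rw [he]
    exact hV
  · intro x hx hx'
    rw [← hVchar]
    show LinearMap.trace ℂ _ (ρ' ⟨x, hx'⟩) = LinearMap.trace ℂ _ (V.ρ ⟨x, hx⟩)
    rw [hres x hx hx']
end
end

section
/- Let N be a finite group and L a normal abelian subgroup of N such that N/L is cyclic. Then there exists an N-equivariant extension map for L ◁ N, i.e., a map Λ assigning to each λ ∈ Irr(L) an extension Λ(λ) ∈ Irr(I_N(λ)) of λ, such that Λ(λ^n) = Λ(λ)^n for all n ∈ N and λ ∈ Irr(L). -/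
open CategoryTheory

noncomputable section

def homRep {G : Type} [Group G] (μ : G →* ℂˣ) : Representation ℂ G ℂ :=
  { toFun := fun g => (μ g : ℂ) • LinearMap.id,
    map_one' := by ext; simp
    map_mul' := by intro g h; ext; simp [mul_smul]; ring }

lemma homRep_apply {G : Type} [Group G] (μ : G →* ℂˣ) (g : G) (x : ℂ) :
    homRep μ g x = (μ g : ℂ) * x := by simp [homRep]

lemma isIrrChar_exists_hom {G : Type} [Group G] [Finite G] (hab : ∀ x y : G, x * y = y * x)
    {χ : G → ℂ} (h : IsIrrChar χ) : ∃ μ : G →* ℂˣ, ∀ x, χ x = μ x := by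
  obtain ⟨V, hS, hchar⟩ := h
  haveI : Simple V := hS
  haveI : Nontrivial ↑V.V := by
    by_contra hnt
    rw [not_nontrivial_iff_subsingleton] at hnt
    haveI : Subsingleton ↑V.V.obj := hnt
    exact id_nonzero V (Action.Hom.ext (FGModuleCat.hom_ext (LinearMap.ext fun x => Subsingleton.elim _ _)))
  obtain ⟨v, hv⟩ := exists_ne (0 : ↑V.V)
  have key : ∀ h : G, ∃ c : ℂ, ∀ w : ↑V.V, V.ρ h w = c • w := by
    intro h
    let fh : V ⟶ V := ⟨FGModuleCat.ofHom (V.ρ h), by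
      intro g
      refine FGModuleCat.hom_ext (LinearMap.ext fun x => ?_)
      show V.ρ h (V.ρ g x) = V.ρ g (V.ρ h x)
      rw [← Module.End.mul_apply, ← Module.End.mul_apply, ← map_mul, ← map_mul, hab g h]⟩
    obtain ⟨c, hc⟩ := endomorphism_simple_eq_smul_id ℂ fh
    have h2 : c • LinearMap.id = V.ρ h := congrArg (fun f => f.hom.hom.hom) hc
    exact ⟨c, fun w => (LinearMap.congr_fun h2 w).symm⟩
  choose c hcc using key
  -- scalars are determined on v
  have hdet : ∀ a b : ℂ, a • v = b • v → a = b := by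
    intro a b hab'
    have : (a - b) • v = 0 := by rw [sub_smul, hab', sub_self]
    rcases smul_eq_zero.mp this with h | h
    · exact sub_eq_zero.mp h
    · exact absurd h hv
  have hc1 : c 1 = 1 := by
    apply hdet
    rw [← hcc 1 v, map_one, one_smul]
    rfl
  have cmul : ∀ a b : G, c (a * b) = c a * c b := by
    intro a b
    apply hdet
    rw [← hcc (a*b) v, map_mul, Module.End.mul_apply, hcc b v, map_smul, hcc a v,
      smul_smul, mul_smul, smul_smul, mul_comm (c b) (c a)]
  have cne : ∀ a : G, c a ≠ 0 := by
    intro a ha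
    have : c (a * a⁻¹) = 0 := by rw [cmul, ha, zero_mul]
    rw [mul_inv_cancel, hc1] at this
    exact one_ne_zero this
  let μ : G →* ℂˣ :=
    { toFun := fun h => Units.mk0 (c h) (cne h),
      map_one' := Units.ext (by simpa using hc1),
      map_mul' := fun a b => Units.ext (by simpa using cmul a b) }
  -- dimension one
  have hμval : ∀ g : G, (μ g : ℂ) = c g := fun g => rfl
  have hcomm2 : ∀ g : G, (LinearMap.toSpanSingleton ℂ (↑V.V) v).comp (homRep μ g) =
      (V.ρ g).comp (LinearMap.toSpanSingleton ℂ (↑V.V) v) := by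
    intro g
    refine LinearMap.ext fun a => ?_
    show ((μ g : ℂ) * a) • v = V.ρ g (a • v)
    rw [hcc g, smul_smul, hμval, mul_comm]
  let W := FDRep.of (homRep μ)
  let φ : W ⟶ V := ⟨FGModuleCat.ofHom (LinearMap.toSpanSingleton ℂ (↑V.V) v),
    fun g => FGModuleCat.hom_ext (hcomm2 g)⟩
  haveI : Mono φ := by
    apply ConcreteCategory.mono_of_injective
    exact (fun a b hab' => hdet a b hab' : Function.Injective φ.hom.hom.hom)
  have hφ : φ ≠ 0 := by
    intro h0
    have h1 : LinearMap.toSpanSingleton ℂ (↑V.V) v = 0 := congrArg (fun f => f.hom.hom.hom) h0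
    have h2 := LinearMap.congr_fun h1 1
    rw [LinearMap.toSpanSingleton_apply, one_smul, LinearMap.zero_apply] at h2
    exact hv h2
  haveI : IsIso φ := isIso_of_mono_of_nonzero hφ
  have hfin : Module.finrank ℂ ↑V.V = 1 := by
    have e : (↑W.V : Type) ≃ₗ[ℂ] (↑V.V : Type) := FDRep.isoToLinearEquiv (asIso φ)
    rw [← e.finrank_eq]
    exact Module.finrank_self ℂ
  refine ⟨μ, fun x => ?_⟩
  rw [← hchar]
  show LinearMap.trace ℂ ↑V.V (V.ρ x) = c x
  have : V.ρ x = c x • LinearMap.id := LinearMap.ext fun w => by rw [hcc x w]; rfl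
  rw [this, map_smul, LinearMap.trace_id, hfin]
  simp

def subRep {G : Type} [Group G] (Y : FDRep ℂ G) (K : Submodule ℂ Y)
    (hK : ∀ g : G, ∀ y ∈ K, Y.ρ g y ∈ K) : Representation ℂ G K :=
  { toFun := fun g => (Y.ρ g).restrict (hK g),
    map_one' := by ext x; simp [LinearMap.restrict_apply]
    map_mul' := by intro g h; ext x; simp [LinearMap.restrict_apply] }

lemma homRep_isIrrChar {G : Type} [Group G] (μ : G →* ℂˣ) :
    IsIrrChar (fun x => (μ x : ℂ)) := by
  refine ⟨FDRep.of (homRep μ), ⟨?_⟩, ?_⟩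
  · intro Y f hm
    constructor
    · intro hiso heq
      have h : 𝟙 (FDRep.of (homRep μ)) = 0 := by
        have h' := congrArg (fun g => CategoryStruct.comp (inv f) g) heq
        simpa using h'
      have h2 := congrArg Action.Hom.hom h
      have h3 : (1 : ℂ) = 0 := congrArg (fun f => f.hom.hom.hom (1 : ℂ)) h
      exact one_ne_zero h3
    · intro hne
      have hf : f.hom.hom.hom ≠ 0 := fun h => hne (Action.Hom.ext (FGModuleCat.hom_ext (h.trans rfl)))
      have hcomm : ∀ (g : G) (y : ↑Y.V), f.hom.hom.hom (Y.ρ g y) = homRep μ g (f.hom.hom.hom y) :=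
        fun g y => LinearMap.congr_fun (congrArg (fun f => f.hom.hom) (f.comm g)) y
      have hinj : Function.Injective f.hom.hom.hom := by
        rw [← LinearMap.ker_eq_bot]
        by_contra hker
        obtain ⟨w, hwK, hw0⟩ := Submodule.exists_mem_ne_zero_of_ne_bot hker
        have hK : ∀ g : G, ∀ y ∈ LinearMap.ker f.hom.hom.hom, Y.ρ g y ∈ LinearMap.ker f.hom.hom.hom := by
          intro g y hy
          rw [LinearMap.mem_ker] at hy ⊢
          exact (hcomm g y).trans (by rw [hy, homRep_apply, mul_zero])
        let ι : FDRep.of (subRep Y _ hK) ⟶ Y := ⟨FGModuleCat.ofHom (LinearMap.ker f.hom.hom.hom).subtype, fun g => rfl⟩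
        have hι : ι ≫ f = 0 := Action.Hom.ext (FGModuleCat.hom_ext (LinearMap.ext fun x => x.2))
        have hι0 : ι = 0 := (cancel_mono f).mp (by rw [hι, Limits.zero_comp])
        have : w = 0 := by
          exact congrArg (fun f => f.hom.hom.hom ⟨w, hwK⟩) hι0
        exact hw0 this
      haveI : IsSimpleOrder (Submodule ℂ ↑(FDRep.of (homRep μ)).V) :=
        inferInstanceAs (IsSimpleOrder (Submodule ℂ ℂ))
      have hsurj : Function.Surjective f.hom.hom.hom := by
        rw [← LinearMap.range_eq_top]
        rcases eq_bot_or_eq_top (LinearMap.range f.hom.hom.hom) with h | h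
        · exact absurd (LinearMap.range_eq_bot.mp h) hf
        · exact h
      let e := LinearEquiv.ofBijective f.hom.hom.hom ⟨hinj, hsurj⟩
      have hfe : ∀ y : Y, f.hom.hom.hom y = e y := fun _ => rfl
      refine ⟨⟨⟨FGModuleCat.ofHom e.symm.toLinearMap, ?_⟩, ?_, ?_⟩⟩
      · intro g
        apply FGModuleCat.hom_ext
        apply LinearMap.ext
        intro x
        apply hinj
        show f.hom.hom.hom (e.symm (homRep μ g x)) = f.hom.hom.hom (Y.ρ g (e.symm x))
        rw [hcomm, hfe, e.apply_symm_apply, hfe, e.apply_symm_apply]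
      · exact Action.Hom.ext (FGModuleCat.hom_ext (LinearMap.ext fun y => e.symm_apply_apply y))
      · exact Action.Hom.ext (FGModuleCat.hom_ext (LinearMap.ext fun x => e.apply_symm_apply x))
  · funext g
    show LinearMap.trace ℂ ℂ ((μ g : ℂ) • LinearMap.id) = (μ g : ℂ)
    rw [map_smul, LinearMap.trace_id]
    simp

open Classical in
lemma ext_lemma {G : Type*} [Group G] [Finite G] (A : Subgroup G) (hA : A.Normal)
    (hcyc : IsCyclic (G ⧸ A)) (μ : ↥A →* ℂˣ)
    (hinv : ∀ (g : G) (a : G) (ha : a ∈ A), μ ⟨g * a * g⁻¹, hA.conj_mem a ha g⟩ = μ ⟨a, ha⟩) :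
    ∃ e : G →* ℂˣ, ∀ (a : G) (ha : a ∈ A), e a = μ ⟨a, ha⟩ := by
  classical
  -- the auxiliary total function
  set m : G → ℂˣ := fun x => if h : x ∈ A then μ ⟨x, h⟩ else 1 with hm
  have hmval : ∀ (x : G) (hx : x ∈ A), m x = μ ⟨x, hx⟩ := fun x hx => dif_pos hx
  have hm_mul : ∀ (x y : G), x ∈ A → y ∈ A → m (x * y) = m x * m y := by
    intro x y hx hy
    rw [hmval x hx, hmval y hy, hmval (x*y) (mul_mem hx hy), ← map_mul,
      MulMemClass.mk_mul_mk]
  have hm_zpow : ∀ (x : G) (hx : x ∈ A) (k : ℤ), m (x ^ k) = m x ^ k := by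
    intro x hx k
    rw [hmval x hx, hmval (x ^ k) (zpow_mem hx k), ← map_zpow]
    congr 1
  have hm_conj : ∀ (g a : G) (ha : a ∈ A), m (g * a * g⁻¹) = m a := by
    intro g a ha
    rw [hmval a ha, hmval (g * a * g⁻¹) (hA.conj_mem a ha g), hinv]
  -- the generator
  obtain ⟨cg, hcg⟩ := hcyc.exists_generator
  obtain ⟨g, hg⟩ := QuotientGroup.mk'_surjective A cg
  set d : ℕ := orderOf cg with hd
  have hdpos : 0 < d := orderOf_pos cg
  have hgd : g ^ d ∈ A := by
    rw [← QuotientGroup.eq_one_iff]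
    rw [← QuotientGroup.mk'_apply, map_pow, hg, hd, pow_orderOf_eq_one]
  -- the d-th root
  obtain ⟨w, hw⟩ := IsAlgClosed.exists_pow_nat_eq ((μ ⟨g ^ d, hgd⟩ : ℂˣ) : ℂ) hdpos
  have hw0 : w ≠ 0 := by
    intro h; rw [h, zero_pow hdpos.ne'] at hw; exact (Units.ne_zero _) hw.symm
  set z : ℂˣ := Units.mk0 w hw0 with hz
  have hzd : z ^ d = μ ⟨g ^ d, hgd⟩ := Units.ext (by push_cast [hz]; exact hw)
  -- choose exponents
  have hexp : ∀ x : G, ∃ a : ℤ, cg ^ a = QuotientGroup.mk' A x := by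
    intro x
    exact Subgroup.mem_zpowers_iff.mp (hcg (QuotientGroup.mk' A x))
  choose aa haa using hexp
  have hmem : ∀ (x : G) (a : ℤ), cg ^ a = QuotientGroup.mk' A x → g ^ (-a) * x ∈ A := by
    intro x a ha
    rw [← QuotientGroup.eq_one_iff, ← QuotientGroup.mk'_apply, map_mul, map_zpow, hg, ← ha]
    group
  have hwd : ∀ (x : G) (a b : ℤ), cg ^ a = QuotientGroup.mk' A x →
      cg ^ b = QuotientGroup.mk' A x →
      z ^ a * m (g ^ (-a) * x) = z ^ b * m (g ^ (-b) * x) := by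
    intro x a b ha hb
    have hdvd : (d : ℤ) ∣ a - b := by
      rw [hd]
      rw [orderOf_dvd_iff_zpow_eq_one, zpow_sub, ha, hb]
      group
    obtain ⟨k, hk⟩ := hdvd
    have hab : a = b + d * k := by omega
    have hsplit : g ^ (-a) * x = (g ^ d) ^ (-k) * (g ^ (-b) * x) := by
      have hexp2 : -(b + (d:ℤ) * k) = (d:ℤ) * (-k) + (-b) := by ring
      rw [hab, hexp2, zpow_add, zpow_mul, zpow_natCast, mul_assoc]
    rw [hsplit, hm_mul _ _ (zpow_mem hgd (-k)) (hmem x b hb),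
      hm_zpow _ hgd, hmval _ hgd, hab]
    rw [zpow_add, zpow_mul, zpow_natCast, hzd]
    group
  -- the extension as a bare function
  set e : G → ℂˣ := fun x => z ^ aa x * m (g ^ (-aa x) * x) with he
  have he_eq : ∀ (x : G) (b : ℤ), cg ^ b = QuotientGroup.mk' A x →
      e x = z ^ b * m (g ^ (-b) * x) := fun x b hb => hwd x (aa x) b (haa x) hb
  have he_mul : ∀ x y : G, e (x * y) = e x * e y := by
    intro x y
    have hxy : cg ^ (aa x + aa y) = QuotientGroup.mk' A (x * y) := by
      rw [zpow_add, haa x, haa y, map_mul]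
    rw [he_eq (x * y) (aa x + aa y) hxy]
    have hu := hmem x (aa x) (haa x)
    have hv := hmem y (aa y) (haa y)
    have hsplit : g ^ (-(aa x + aa y)) * (x * y) =
        (g ^ (-aa y) * (g ^ (-aa x) * x) * (g ^ (-aa y))⁻¹) * (g ^ (-aa y) * y) := by
      group
    rw [hsplit, hm_mul _ _ (by
        have := hA.conj_mem _ hu (g ^ (-aa y)); exact this) hv,
      hm_conj _ _ hu]
    show _ = (z ^ aa x * m (g ^ (-aa x) * x)) * (z ^ aa y * m (g ^ (-aa y) * y))
    rw [zpow_add]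
    exact mul_mul_mul_comm _ _ _ _
  have he_one : e 1 = 1 := by
    have h0 : cg ^ (0 : ℤ) = QuotientGroup.mk' A 1 := by simp
    rw [he_eq 1 0 h0]
    simp only [zpow_zero, one_mul]
    rw [show g ^ (-(0:ℤ)) * 1 = (1 : G) by group, hmval 1 (one_mem A)]
    rw [show (⟨1, one_mem A⟩ : ↥A) = 1 from rfl, map_one]
  refine ⟨{ toFun := e, map_one' := he_one, map_mul' := he_mul }, ?_⟩
  intro a ha
  have h0 : cg ^ (0 : ℤ) = QuotientGroup.mk' A a := by
    rw [zpow_zero]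
    exact ((QuotientGroup.eq_one_iff a).mpr ha).symm
  show e a = _
  rw [he_eq a 0 h0]
  simp only [zpow_zero, one_mul]
  rw [show g ^ (-(0:ℤ)) * a = a by group, hmval a ha]


section Helpers

variable {N : Type*} [Group N] {M : Type*}

lemma mem_inertia_iff (L : Subgroup N) (hL : L.Normal) (ψ : ↥L → M) (d : M) (x : N) :
    x ∈ inertia L hL ψ d ↔
      ∀ (t : N) (ht : t ∈ L), ψ ⟨x * t * x⁻¹, hL.conj_mem t ht x⟩ = ψ ⟨t, ht⟩ := by
  constructor
  · intro h t ht
    have h2 := h t ht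
    rwa [extFun, extFun, dif_pos (hL.conj_mem t ht x), dif_pos ht] at h2
  · intro h t ht
    rw [extFun, extFun, dif_pos (hL.conj_mem t ht x), dif_pos ht]
    exact h t ht

lemma conjChar_comp (L : Subgroup N) (hL : L.Normal) (m n : N) (ψ : ↥L → M) :
    conjChar L hL m (conjChar L hL n ψ) = conjChar L hL (n * m) ψ := by
  funext x
  show ψ ⟨n * (m * ↑x * m⁻¹) * n⁻¹, _⟩ = ψ ⟨(n * m) * ↑x * (n * m)⁻¹, _⟩
  exact congrArg ψ (Subtype.ext (by group))

lemma conjChar_one (L : Subgroup N) (hL : L.Normal) (ψ : ↥L → M) :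
    conjChar L hL 1 ψ = ψ := by
  funext x
  show ψ ⟨1 * ↑x * 1⁻¹, _⟩ = ψ x
  exact congrArg ψ (Subtype.ext (by group))

lemma mem_inertia_conjChar_iff (L : Subgroup N) (hL : L.Normal) (n : N) (ψ : ↥L → M) (d : M)
    (x : N) :
    x ∈ inertia L hL (conjChar L hL n ψ) d ↔ n * x * n⁻¹ ∈ inertia L hL ψ d := by
  rw [mem_inertia_iff, mem_inertia_iff]
  constructor
  · intro h t ht
    have hs : n⁻¹ * t * n ∈ L := by
      have := hL.conj_mem t ht n⁻¹
      rwa [inv_inv] at this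
    have h2 := h (n⁻¹ * t * n) hs
    calc ψ ⟨(n * x * n⁻¹) * t * (n * x * n⁻¹)⁻¹, hL.conj_mem t ht (n * x * n⁻¹)⟩
        = ψ ⟨n * (x * (n⁻¹ * t * n) * x⁻¹) * n⁻¹, hL.conj_mem _ (hL.conj_mem _ hs x) n⟩ :=
          congrArg ψ (Subtype.ext (by group))
      _ = ψ ⟨n * (n⁻¹ * t * n) * n⁻¹, hL.conj_mem _ hs n⟩ := h2
      _ = ψ ⟨t, ht⟩ := congrArg ψ (Subtype.ext (by group))
  · intro h t ht
    have hs : n * t * n⁻¹ ∈ L := hL.conj_mem t ht n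
    have h2 := h (n * t * n⁻¹) hs
    show ψ ⟨n * (x * t * x⁻¹) * n⁻¹, _⟩ = ψ ⟨n * t * n⁻¹, _⟩
    calc ψ ⟨n * (x * t * x⁻¹) * n⁻¹, hL.conj_mem _ (hL.conj_mem t ht x) n⟩
        = ψ ⟨(n * x * n⁻¹) * (n * t * n⁻¹) * (n * x * n⁻¹)⁻¹, hL.conj_mem _ hs _⟩ :=
          congrArg ψ (Subtype.ext (by group))
      _ = ψ ⟨n * t * n⁻¹, hs⟩ := h2

lemma mem_inertia_of_conjChar_eq (L : Subgroup N) (hL : L.Normal) {k : N} {ψ : ↥L → M} (d : M)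
    (h : conjChar L hL k ψ = ψ) : k ∈ inertia L hL ψ d := by
  rw [mem_inertia_iff]
  intro t ht
  exact congrFun h ⟨t, ht⟩

/-- Conjugation as a monoid hom on a normal subgroup. -/
def conjSub (L : Subgroup N) (hL : L.Normal) (n : N) : ↥L →* ↥L where
  toFun := fun x => ⟨n * ↑x * n⁻¹, hL.conj_mem ↑x x.2 n⟩
  map_one' := Subtype.ext (by push_cast; group)
  map_mul' := fun a b => Subtype.ext (by push_cast; group)

lemma conjChar_hom_exists (L : Subgroup N) (hL : L.Normal)
    {χ ρ : ↥L → ℂ} {n : N} (h : χ = conjChar L hL n ρ) (μ : ↥L →* ℂˣ)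
    (hμ : ∀ x, χ x = μ x) : ∃ ν : ↥L →* ℂˣ, ∀ x, ρ x = ν x := by
  subst h
  refine ⟨μ.comp (conjSub L hL n⁻¹), fun x => ?_⟩
  have h4 := hμ (conjSub L hL n⁻¹ x)
  calc ρ x = conjChar L hL n ρ (conjSub L hL n⁻¹ x) :=
        congrArg ρ (Subtype.ext (by show (↑x : N) = n * (n⁻¹ * ↑x * (n⁻¹)⁻¹) * n⁻¹; group))
    _ = μ (conjSub L hL n⁻¹ x) := h4
    _ = (μ.comp (conjSub L hL n⁻¹)) x := rfl

end Helpers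

/-- If `L ◁ N` is a normal abelian subgroup of a finite group `N` with `N/L`
cyclic, then there is an `N`-equivariant extension map for `L ◁ N`: each irreducible
character `λ` of `L` is assigned an extension `Λ λ ∈ Irr(I_N(λ))`, and
`Λ (λ^n) = (Λ λ)^n` for all `n ∈ N`. -/
theorem stmt1 {N : Type} [Group N] [Finite N] (L : Subgroup N) [hL : L.Normal]
    (hab : ∀ x y : ↥L, x * y = y * x) (hcyc : IsCyclic (N ⧸ L)) :
    ∃ Λ : (χ : ↥L → ℂ) → (↥(inertia L hL χ 0) → ℂ),
      ∀ χ : ↥L → ℂ, IsIrrChar χ →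
        (IsIrrChar (Λ χ) ∧
          (∀ (x : N) (hx : x ∈ L) (hx' : x ∈ inertia L hL χ 0),
            Λ χ ⟨x, hx'⟩ = χ ⟨x, hx⟩) ∧
          (∀ (n : N) (x : N) (hx : x ∈ inertia L hL (conjChar L hL n χ) 0)
              (hx' : n * x * n⁻¹ ∈ inertia L hL χ 0),
            Λ (conjChar L hL n χ) ⟨x, hx⟩ = Λ χ ⟨n * x * n⁻¹, hx'⟩)) := by
  classical
  -- the orbit setoid
  letI sd : Setoid (↥L → ℂ) :=
    ⟨fun χ ψ => ∃ n : N, ψ = conjChar L hL n χ, by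
      constructor
      · intro χ; exact ⟨1, (conjChar_one L hL χ).symm⟩
      · rintro χ ψ ⟨n, rfl⟩
        exact ⟨n⁻¹, by rw [conjChar_comp, mul_inv_cancel, conjChar_one]⟩
      · rintro χ ψ ω ⟨n, rfl⟩ ⟨m, rfl⟩
        exact ⟨n * m, by rw [conjChar_comp]⟩⟩
  let rep : (↥L → ℂ) → (↥L → ℂ) := fun χ => Quotient.out (Quotient.mk sd χ)
  have hrep : ∀ χ, ∃ n : N, χ = conjChar L hL n (rep χ) :=
    fun χ => Quotient.exact (Quotient.out_eq (Quotient.mk sd χ))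
  have hrep_eq : ∀ (χ : ↥L → ℂ) (n : N), rep (conjChar L hL n χ) = rep χ := by
    intro χ n
    show Quotient.out _ = Quotient.out _
    congr 1
    apply Quotient.sound
    exact ⟨n⁻¹, by rw [conjChar_comp, mul_inv_cancel, conjChar_one]⟩
  choose nn hnn using hrep
  -- the base extension maps
  have key : ∀ ψ : ↥L → ℂ, ∃ e : ↥(inertia L hL ψ 0) →* ℂˣ,
      (∃ μ : ↥L →* ℂˣ, ∀ x, ψ x = μ x) →
      ∀ (x : N) (hx : x ∈ L) (hx' : x ∈ inertia L hL ψ 0), (e ⟨x, hx'⟩ : ℂ) = ψ ⟨x, hx⟩ := by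
    intro ψ
    by_cases h : ∃ μ : ↥L →* ℂˣ, ∀ x, ψ x = μ x
    · obtain ⟨μ, hμ⟩ := h
      set I := inertia L hL ψ 0 with hI
      have hLI : L ≤ I := by
        intro t htL
        rw [hI, mem_inertia_iff]
        intro s hs
        rw [hμ, hμ]
        have he : (⟨t * s * t⁻¹, hL.conj_mem s hs t⟩ : ↥L) =
            ⟨t, htL⟩ * ⟨s, hs⟩ * (⟨t, htL⟩ : ↥L)⁻¹ := Subtype.ext (by push_cast; group)
        rw [he, map_mul, map_inv, map_mul, mul_comm (μ ⟨t, htL⟩), mul_assoc,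
          mul_inv_cancel, mul_one]
      -- the quotient is cyclic
      have hAnorm : (L.subgroupOf I).Normal := Subgroup.normal_subgroupOf
      let f : ↥I →* N ⧸ L := (QuotientGroup.mk' L).comp I.subtype
      have hker : f.ker = L.subgroupOf I := by
        ext x
        simp [f, MonoidHom.mem_ker, QuotientGroup.eq_one_iff, Subgroup.mem_subgroupOf]
      haveI := hcyc
      haveI : IsCyclic ↥f.range := Subgroup.isCyclic _
      have hcyc2 : IsCyclic (↥I ⧸ L.subgroupOf I) := by
        have e2 := QuotientGroup.quotientKerEquivRange f
        have e3 := QuotientGroup.quotientMulEquivOfEq hker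
        exact isCyclic_of_surjective (e3.toMonoidHom.comp e2.symm.toMonoidHom)
          (e3.surjective.comp e2.symm.surjective)
      -- the invariant character on the subgroup
      let μA : ↥(L.subgroupOf I) →* ℂˣ := μ.comp (Subgroup.subgroupOfEquivOfLe hLI).toMonoidHom
      have hμA : ∀ (x : ↥I) (hx : x ∈ L.subgroupOf I), μA ⟨x, hx⟩ = μ ⟨↑x, hx⟩ := fun x hx => rfl
      have hinv : ∀ (g a : ↥I) (ha : a ∈ L.subgroupOf I),
          μA ⟨g * a * g⁻¹, hAnorm.conj_mem a ha g⟩ = μA ⟨a, ha⟩ := by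
        intro g a ha
        rw [hμA, hμA]
        apply Units.ext
        have hg := (mem_inertia_iff L hL ψ 0 ↑g).mp g.2 ↑a ha
        rw [hμ, hμ] at hg
        calc (μ ⟨↑(g * a * g⁻¹), _⟩ : ℂ)
            = μ ⟨↑g * ↑a * (↑g)⁻¹, hL.conj_mem ↑a ha ↑g⟩ := by
              exact congrArg _ (congrArg μ (Subtype.ext (by push_cast; group)))
          _ = μ ⟨↑a, ha⟩ := hg
      obtain ⟨e, he⟩ := ext_lemma (L.subgroupOf I) hAnorm hcyc2 μA hinv
      refine ⟨e, fun _ => ?_⟩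
      intro x hx hx'
      have ha : (⟨x, hx'⟩ : ↥I) ∈ L.subgroupOf I := by
        rwa [Subgroup.mem_subgroupOf]
      rw [he ⟨x, hx'⟩ ha, hμA, hμ]
    · exact ⟨1, fun h' => absurd h' h⟩
  choose E hE using key
  -- memberships for the definition of Λ
  have hmem2 : ∀ (χ : ↥L → ℂ) (x : N), x ∈ inertia L hL χ 0 →
      nn χ * x * (nn χ)⁻¹ ∈ inertia L hL (rep χ) 0 := by
    intro χ x hx
    rw [hnn χ] at hx
    exact (mem_inertia_conjChar_iff L hL (nn χ) (rep χ) 0 x).mp hx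
  refine ⟨fun χ x => (E (rep χ) ⟨nn χ * ↑x * (nn χ)⁻¹, hmem2 χ ↑x x.2⟩ : ℂ), ?_⟩
  intro χ hirr
  refine ⟨?_, ?_, ?_⟩
  · -- irreducibility
    let cmap : ↥(inertia L hL χ 0) →* ↥(inertia L hL (rep χ) 0) :=
      { toFun := fun x => ⟨nn χ * ↑x * (nn χ)⁻¹, hmem2 χ ↑x x.2⟩,
        map_one' := Subtype.ext (by push_cast; group),
        map_mul' := fun a b => Subtype.ext (by push_cast; group) }
    exact homRep_isIrrChar ((E (rep χ)).comp cmap)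
  · -- restriction to L
    intro x hx hx'
    obtain ⟨μχ, hμχ⟩ := isIrrChar_exists_hom hab hirr
    have hrephom : ∃ ν : ↥L →* ℂˣ, ∀ y, rep χ y = ν y :=
      conjChar_hom_exists L hL (hnn χ) μχ hμχ
    show (E (rep χ) ⟨nn χ * x * (nn χ)⁻¹, hmem2 χ x hx'⟩ : ℂ) = χ ⟨x, hx⟩
    rw [hE (rep χ) hrephom (nn χ * x * (nn χ)⁻¹) (hL.conj_mem x hx (nn χ)) (hmem2 χ x hx')]
    exact (congrFun (hnn χ) ⟨x, hx⟩).symm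
  · -- equivariance
    intro n x hx hx'
    have hro : rep (conjChar L hL n χ) = rep χ := hrep_eq χ n
    have h1 : conjChar L hL (nn χ * n) (rep χ) = conjChar L hL n χ := by
      conv_rhs => rw [hnn χ]
      rw [conjChar_comp]
    have h2 : conjChar L hL (nn (conjChar L hL n χ)) (rep χ) = conjChar L hL n χ := by
      conv_rhs => rw [hnn (conjChar L hL n χ)]
      rw [hro]
    have hkmem : nn (conjChar L hL n χ) * (nn χ * n)⁻¹ ∈ inertia L hL (rep χ) 0 := by
      apply mem_inertia_of_conjChar_eq
      rw [← conjChar_comp, h2, ← h1, conjChar_comp, mul_inv_cancel, conjChar_one]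
    have hEconj : ∀ (a b : N) (pa : a ∈ inertia L hL (rep χ) 0)
        (pb : b ∈ inertia L hL (rep χ) 0),
        a = (nn (conjChar L hL n χ) * (nn χ * n)⁻¹) * b *
          (nn (conjChar L hL n χ) * (nn χ * n)⁻¹)⁻¹ →
        E (rep χ) ⟨a, pa⟩ = E (rep χ) ⟨b, pb⟩ := by
      intro a b pa pb hab'
      have helem : (⟨a, pa⟩ : ↥(inertia L hL (rep χ) 0)) =
          ⟨nn (conjChar L hL n χ) * (nn χ * n)⁻¹, hkmem⟩ * ⟨b, pb⟩ *
          (⟨nn (conjChar L hL n χ) * (nn χ * n)⁻¹, hkmem⟩ : ↥(inertia L hL (rep χ) 0))⁻¹ :=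
        Subtype.ext (by push_cast; exact hab')
      rw [helem, map_mul, map_inv, map_mul,
        mul_comm (E (rep χ) ⟨nn (conjChar L hL n χ) * (nn χ * n)⁻¹, hkmem⟩), mul_assoc,
        mul_inv_cancel, mul_one]
    have hcongr : ∀ (ρ₁ ρ₂ : ↥L → ℂ) (h : ρ₁ = ρ₂) (a : N) (p : a ∈ inertia L hL ρ₁ 0),
        (E ρ₁ ⟨a, p⟩ : ℂ) = E ρ₂ ⟨a, h ▸ p⟩ := by
      intro ρ₁ ρ₂ h a p
      subst h
      rfl
    show (E (rep (conjChar L hL n χ))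
        ⟨nn (conjChar L hL n χ) * x * (nn (conjChar L hL n χ))⁻¹,
          hmem2 (conjChar L hL n χ) x hx⟩ : ℂ) =
      (E (rep χ) ⟨nn χ * (n * x * n⁻¹) * (nn χ)⁻¹, hmem2 χ (n * x * n⁻¹) hx'⟩ : ℂ)
    rw [hcongr (rep (conjChar L hL n χ)) (rep χ) hro
      (nn (conjChar L hL n χ) * x * (nn (conjChar L hL n χ))⁻¹)
      (hmem2 (conjChar L hL n χ) x hx)]
    exact congrArg (fun u : ℂˣ => (u : ℂ)) (hEconj _ _ _ _ (by group))
end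
end

section
/- Let K be a finite group generated by subgroups K_1, …, K_j with [K_r, K_{r'}] = 1 for all r ≠ r', and let T_r ◁ K_r be normal abelian subgroups such that T := ⟨T_1, …, T_j⟩ is abelian and normal in K. Let λ ∈ Irr(T) be a linear character and λ_r its restriction to T_r. Then the inertia group of λ in K equals the product of inertia groups: I_K(λ) = I_{K_1}(λ_1) · I_{K_2}(λ_2) ⋯ I_{K_j}(λ_j). -/
open CategoryTheory

noncomputable section

section Aux

variable {G : Type*} [Group G]

lemma extFun_pos {N : Type*} [Group N] {M : Type*} (T : Subgroup N)
    (χ : ↥T → M) (d : M) {x : N} (h : x ∈ T) : extFun T χ d x = χ ⟨x, h⟩ := dif_pos h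

lemma prod_ofFn_mul : ∀ {j : ℕ} (f g : Fin j → G),
    (∀ r r' : Fin j, r ≠ r' → Commute (f r) (g r')) →
    (List.ofFn f).prod * (List.ofFn g).prod = (List.ofFn fun r => f r * g r).prod := by
  intro j
  induction j with
  | zero => intro f g _; simp
  | succ n ih =>
    intro f g h
    rw [List.ofFn_succ, List.ofFn_succ, List.ofFn_succ]
    simp only [List.prod_cons, Function.comp]
    have hg0 : Commute (List.ofFn fun i : Fin n => f i.succ).prod (g 0) := by
      apply Commute.list_prod_left
      intro x hx
      obtain ⟨i, rfl⟩ := List.mem_ofFn.1 hx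
      exact h i.succ 0 (Fin.succ_ne_zero i)
    calc f 0 * (List.ofFn fun i : Fin n => f i.succ).prod *
          (g 0 * (List.ofFn fun i : Fin n => g i.succ).prod)
        = f 0 * ((List.ofFn fun i : Fin n => f i.succ).prod * g 0) *
          (List.ofFn fun i : Fin n => g i.succ).prod := by group
      _ = f 0 * g 0 * ((List.ofFn fun i : Fin n => f i.succ).prod *
          (List.ofFn fun i : Fin n => g i.succ).prod) := by rw [hg0.eq]; group
      _ = f 0 * g 0 * (List.ofFn fun i : Fin n => f i.succ * g i.succ).prod := by
          rw [ih (fun i => f i.succ) (fun i => g i.succ)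
            (fun r r' hne => h r.succ r'.succ (by simpa using hne))]

lemma prod_ofFn_inv {j : ℕ} (f : Fin j → G)
    (h : ∀ r r' : Fin j, r ≠ r' → Commute (f r) (f r')) :
    ((List.ofFn f).prod)⁻¹ = (List.ofFn fun r => (f r)⁻¹).prod := by
  apply inv_eq_of_mul_eq_one_right
  rw [prod_ofFn_mul f (fun r => (f r)⁻¹)
    (fun r r' hne => (h r r' hne).inv_right)]
  simp

lemma prod_ofFn_single : ∀ {j : ℕ} (f : Fin j → G) (r : Fin j),
    (∀ r', r' ≠ r → f r' = 1) → (List.ofFn f).prod = f r := by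
  intro j
  induction j with
  | zero => intro f r; exact r.elim0
  | succ n ih =>
    intro f r h
    rw [List.ofFn_succ, List.prod_cons]
    induction r using Fin.cases with
    | zero =>
      have : ∀ i : Fin n, f i.succ = 1 := fun i => h i.succ (Fin.succ_ne_zero i)
      simp [this]
    | succ i =>
      have h0 : f 0 = 1 := h 0 (Ne.symm (Fin.succ_ne_zero i))
      rw [h0, one_mul,
        ih (fun i' => f i'.succ) i (fun r' hne => h r'.succ (by simpa using hne))]

lemma prod_ofFn_conj : ∀ {j : ℕ} (f : Fin j → G) (r : Fin j) (t : G),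
    (∀ r', r' ≠ r → Commute (f r') t) →
    (∀ r', r' ≠ r → Commute (f r') (f r * t * (f r)⁻¹)) →
    (List.ofFn f).prod * t * ((List.ofFn f).prod)⁻¹ = f r * t * (f r)⁻¹ := by
  intro j
  induction j with
  | zero => intro f r; exact r.elim0
  | succ n ih =>
    intro f r t h1 h2
    rw [List.ofFn_succ, List.prod_cons]
    set P := (List.ofFn fun i : Fin n => f i.succ).prod with hP
    have key : (f 0 * P) * t * (f 0 * P)⁻¹ = f 0 * (P * t * P⁻¹) * (f 0)⁻¹ := by group
    induction r using Fin.cases with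
    | zero =>
      have hPt : Commute P t := by
        apply Commute.list_prod_left
        intro x hx
        obtain ⟨i, rfl⟩ := List.mem_ofFn.1 hx
        exact h1 i.succ (Fin.succ_ne_zero i)
      rw [key, hPt.eq, mul_inv_cancel_right]
    | succ i =>
      have hih : P * t * P⁻¹ = f i.succ * t * (f i.succ)⁻¹ :=
        ih (fun i' => f i'.succ) i t
          (fun r' hne => h1 r'.succ (by simpa using hne))
          (fun r' hne => h2 r'.succ (by simpa using hne))
      have hc : Commute (f 0) (f i.succ * t * (f i.succ)⁻¹) :=
        h2 0 (Ne.symm (Fin.succ_ne_zero i))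
      rw [key, hih, hc.eq, mul_inv_cancel_right]

end Aux

/-- Let `K` be generated by pairwise commuting subgroups `K_r`, with normal
abelian subgroups `T_r ◁ K_r`, such that `T = ⟨T_0, …, T_{j-1}⟩` is abelian and normal
in `K`. For a linear character `λ` of `T` with restrictions `λ_r` to `T_r`, the inertia
group satisfies `I_K(λ) = I_{K_0}(λ_0) ⋯ I_{K_{j-1}}(λ_{j-1})` (as a product of sets):
`k` fixes `λ` iff `k = k_0 ⋯ k_{j-1}` with each `k_r ∈ K_r` fixing `λ_r`. -/
theorem stmt4 {K : Type*} [Group K] [Finite K] (j : ℕ) (Ks Ts : Fin j → Subgroup K)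
    (T : Subgroup K) (hT : T.Normal) (hTab : ∀ x y : ↥T, x * y = y * x)
    (hTdef : T = ⨆ r, Ts r)
    (hKgen : (⨆ r, Ks r) = ⊤)
    (hcomm : ∀ r r' : Fin j, r ≠ r' → ∀ x ∈ Ks r, ∀ y ∈ Ks r', Commute x y)
    (hTK : ∀ r, Ts r ≤ Ks r)
    (hTrnorm : ∀ r, ∀ k ∈ Ks r, ∀ t ∈ Ts r, k * t * k⁻¹ ∈ Ts r)
    (lam : ↥T →* ℂˣ) :
    ∀ k : K,
      k ∈ inertia T hT (⇑lam) 1 ↔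
        ∃ f : Fin j → K,
          (∀ r, f r ∈ Ks r ∧ ∀ t ∈ Ts r,
            extFun T (⇑lam) 1 (f r * t * (f r)⁻¹) = extFun T (⇑lam) 1 t) ∧
          k = (List.ofFn f).prod := by
  have hTle : ∀ r, Ts r ≤ T := fun r => hTdef ▸ le_iSup Ts r
  -- key conjugation lemma
  have conj_key : ∀ (f : Fin j → K), (∀ r, f r ∈ Ks r) → ∀ (r : Fin j), ∀ t ∈ Ts r,
      (List.ofFn f).prod * t * ((List.ofFn f).prod)⁻¹ = f r * t * (f r)⁻¹ := by
    intro f hf r t ht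
    apply prod_ofFn_conj
    · intro r' hne
      exact hcomm r' r hne (f r') (hf r') t (hTK r ht)
    · intro r' hne
      exact hcomm r' r hne (f r') (hf r') _
        (hTK r (hTrnorm r (f r) (hf r) t ht))
  -- the set of products is a subgroup containing all `Ks r`
  let S : Subgroup K :=
    { carrier := {k | ∃ f : Fin j → K, (∀ r, f r ∈ Ks r) ∧ k = (List.ofFn f).prod}
      one_mem' := ⟨fun _ => 1, fun r => one_mem _, by simp⟩
      mul_mem' := by
        rintro a b ⟨f, hf, rfl⟩ ⟨g, hg, rfl⟩
        refine ⟨fun r => f r * g r, fun r => mul_mem (hf r) (hg r), ?_⟩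
        exact prod_ofFn_mul f g fun r r' hne =>
          hcomm r r' hne (f r) (hf r) (g r') (hg r')
      inv_mem' := by
        rintro a ⟨f, hf, rfl⟩
        refine ⟨fun r => (f r)⁻¹, fun r => inv_mem (hf r), ?_⟩
        exact prod_ofFn_inv f fun r r' hne =>
          hcomm r r' hne (f r) (hf r) (f r') (hf r') }
  have hKS : ∀ k : K, ∃ f : Fin j → K, (∀ r, f r ∈ Ks r) ∧ k = (List.ofFn f).prod := by
    intro k
    have hle : (⊤ : Subgroup K) ≤ S := by
      rw [← hKgen]
      apply iSup_le
      intro r x hx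
      refine ⟨fun r' => if r' = r then x else 1, ?_, ?_⟩
      · intro r'
        by_cases h : r' = r
        · subst h; simpa using hx
        · simp only [if_neg h]; exact one_mem _
      · rw [prod_ofFn_single _ r (fun r' hne => if_neg hne)]
        simp
    exact hle (Subgroup.mem_top k)
  intro k
  constructor
  · intro hk
    obtain ⟨f, hf, rfl⟩ := hKS k
    refine ⟨f, fun r => ⟨hf r, fun t ht => ?_⟩, rfl⟩
    rw [← conj_key f hf r t ht]
    exact hk t (hTle r ht)
  · rintro ⟨f, hf, rfl⟩
    set k := (List.ofFn f).prod with hk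
    have hf1 : ∀ r, f r ∈ Ks r := fun r => (hf r).1
    have main : ∀ t : K, t ∈ T →
        ∃ ht : t ∈ T, lam ⟨k * t * k⁻¹, hT.conj_mem t ht k⟩ = lam ⟨t, ht⟩ := by
      intro t ht
      have ht' : t ∈ ⨆ r, Ts r := hTdef ▸ ht
      refine Subgroup.iSup_induction Ts
        (C := fun x => ∃ hx : x ∈ T,
          lam ⟨k * x * k⁻¹, hT.conj_mem x hx k⟩ = lam ⟨x, hx⟩) ht' ?_ ?_ ?_
      · intro r x hx
        have hxT : x ∈ T := hTle r hx
        refine ⟨hxT, ?_⟩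
        have hcj : k * x * k⁻¹ = f r * x * (f r)⁻¹ := conj_key f hf1 r x hx
        have hmem : f r * x * (f r)⁻¹ ∈ T := hTle r (hTrnorm r (f r) (hf1 r) x hx)
        have := (hf r).2 x hx
        rw [extFun_pos T (⇑lam) 1 hmem, extFun_pos T (⇑lam) 1 hxT] at this
        have harg : (⟨k * x * k⁻¹, hT.conj_mem x hxT k⟩ : ↥T) = ⟨f r * x * (f r)⁻¹, hmem⟩ :=
          Subtype.ext hcj
        rw [harg]
        exact this
      · refine ⟨one_mem T, ?_⟩
        have : (⟨k * 1 * k⁻¹, hT.conj_mem 1 (one_mem T) k⟩ : ↥T) = ⟨1, one_mem T⟩ :=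
          Subtype.ext (by group)
        rw [this]
      · rintro x y ⟨hx, hlx⟩ ⟨hy, hly⟩
        refine ⟨mul_mem hx hy, ?_⟩
        have harg : (⟨k * (x * y) * k⁻¹, hT.conj_mem _ (mul_mem hx hy) k⟩ : ↥T) =
            ⟨k * x * k⁻¹, hT.conj_mem x hx k⟩ * ⟨k * y * k⁻¹, hT.conj_mem y hy k⟩ :=
          Subtype.ext (show k * (x * y) * k⁻¹ = (k * x * k⁻¹) * (k * y * k⁻¹) by group)
        have harg2 : (⟨x * y, mul_mem hx hy⟩ : ↥T) = ⟨x, hx⟩ * ⟨y, hy⟩ := rfl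
        rw [harg, harg2, map_mul, map_mul, hlx, hly]
    intro t ht
    obtain ⟨ht', heq⟩ := main t ht
    rw [extFun_pos T (⇑lam) 1 (hT.conj_mem t ht' k), extFun_pos T (⇑lam) 1 ht']
    exact heq
end
end

section
/- Let N be a finite group, T a normal abelian subgroup, δ a linear character of N, and set T₀ = T ∩ ker(δ). Let μ be a linear character of T₀ and λ a linear character of T extending μ. Suppose that for every n ∈ I_N(μ) there exists an integer i with λ^n = λ · (δ|_T)^i. Then I_N(λ) is a normal subgroup of I_N(μ), and the quotient I_N(μ)/I_N(λ) is cyclic. -/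
open CategoryTheory

noncomputable section

section Stmt6Aux

variable {N : Type*} [Group N]

lemma mem_inertia_iff_s6 {M : Type*} (T : Subgroup N) (hT : T.Normal)
    (χ : ↥T → M) (d : M) (n : N) :
    n ∈ inertia T hT χ d ↔
      ∀ t : ↥T, χ ⟨n * ↑t * n⁻¹, hT.conj_mem ↑t t.2 n⟩ = χ t := by
  have base : n ∈ inertia T hT χ d ↔
      ∀ t ∈ T, extFun T χ d (n * t * n⁻¹) = extFun T χ d t := Iff.rfl
  rw [base]
  constructor
  · intro h t
    have h1 := h ↑t t.2
    simp only [extFun] at h1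
    rw [dif_pos (hT.conj_mem ↑t t.2 n), dif_pos t.2] at h1
    exact h1
  · intro h t ht
    simp only [extFun]
    rw [dif_pos (hT.conj_mem t ht n), dif_pos ht]
    exact h ⟨t, ht⟩

/-- The key predicate: `λ^n = λ · (δ|_T)^i`. -/
def Pred (T : Subgroup N) (hT : T.Normal) (δ : N →* ℂˣ) (lam : ↥T →* ℂˣ)
    (n : N) (i : ℤ) : Prop :=
  ∀ t : ↥T, lam ⟨n * ↑t * n⁻¹, hT.conj_mem ↑t t.2 n⟩ = lam t * δ ↑t ^ i

variable {T : Subgroup N} {hT : T.Normal} {δ : N →* ℂˣ} {lam : ↥T →* ℂˣ}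

lemma lam_congr (lam : ↥T →* ℂˣ) {x y : N} (hx : x ∈ T) (hy : y ∈ T) (h : x = y) :
    lam ⟨x, hx⟩ = lam ⟨y, hy⟩ := by subst h; rfl

lemma delta_conj (δ : N →* ℂˣ) (m t : N) : δ (m * t * m⁻¹) = δ t := by
  rw [map_mul, map_mul, map_inv, mul_comm (δ m) (δ t), mul_assoc, mul_inv_cancel, mul_one]

lemma Pred.mul {a b : N} {i j : ℤ} (ha : Pred T hT δ lam a i) (hb : Pred T hT δ lam b j) :
    Pred T hT δ lam (a * b) (i + j) := by
  intro t
  have hmem : b * ↑t * b⁻¹ ∈ T := hT.conj_mem ↑t t.2 b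
  have e1 : a * b * ↑t * (a * b)⁻¹ = a * (b * ↑t * b⁻¹) * a⁻¹ := by group
  calc lam ⟨a * b * ↑t * (a * b)⁻¹, hT.conj_mem ↑t t.2 (a * b)⟩
      = lam ⟨a * (b * ↑t * b⁻¹) * a⁻¹, hT.conj_mem _ hmem a⟩ := lam_congr lam _ _ e1
    _ = lam ⟨b * ↑t * b⁻¹, hmem⟩ * δ (b * ↑t * b⁻¹) ^ i := ha ⟨_, hmem⟩
    _ = (lam t * δ ↑t ^ j) * δ ↑t ^ i := by rw [hb t, delta_conj]
    _ = lam t * δ ↑t ^ (i + j) := by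
        rw [zpow_add, mul_assoc, mul_comm (δ ↑t ^ j)]

lemma Pred.inv {a : N} {i : ℤ} (ha : Pred T hT δ lam a i) :
    Pred T hT δ lam a⁻¹ (-i) := by
  intro t
  have hmem : a⁻¹ * ↑t * a ∈ T := by simpa using hT.conj_mem ↑t t.2 a⁻¹
  have h1 := ha ⟨a⁻¹ * ↑t * a, hmem⟩
  have e1 : a * (a⁻¹ * ↑t * a) * a⁻¹ = ↑t := by group
  rw [lam_congr lam _ t.2 e1] at h1
  have e2 : δ (a⁻¹ * ↑t * a) = δ ↑t := by
    rw [map_mul, map_mul, map_inv, mul_comm ((δ a)⁻¹) (δ ↑t), mul_assoc, inv_mul_cancel,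
      mul_one]
  rw [e2] at h1
  have e3 : a⁻¹ * ↑t * a⁻¹⁻¹ = a⁻¹ * ↑t * a := by rw [inv_inv]
  rw [lam_congr lam _ hmem e3, zpow_neg]
  exact eq_mul_inv_iff_mul_eq.mpr h1.symm

lemma Pred.one : Pred T hT δ lam 1 0 := by
  intro t
  rw [zpow_zero, mul_one]
  exact lam_congr lam _ t.2 (by group)

lemma Pred.zpow {g : N} {k : ℤ} (hg : Pred T hT δ lam g k) (q : ℤ) :
    Pred T hT δ lam (g ^ q) (q * k) := by
  induction q using Int.induction_on with
  | zero => rw [zpow_zero, zero_mul]; exact Pred.one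
  | succ i ih =>
      rw [show ((i : ℤ) + 1) * k = (i : ℤ) * k + k by ring, zpow_add_one]
      exact ih.mul hg
  | pred i ih =>
      rw [show (-(i : ℤ) - 1) * k = -(i : ℤ) * k + (-k) by ring, zpow_sub_one]
      exact ih.mul hg.inv

end Stmt6Aux

/-- Let `N` be finite, `T ◁ N` abelian, `δ` a linear character of `N`,
`T₀ = T ∩ ker δ`, `μ` a linear character of `T₀` and `λ` a linear character of `T`
extending `μ`. If for every `n ∈ I_N(μ)` there is `i : ℤ` with `λ^n = λ·(δ|_T)^i`, then
`I_N(λ) ◁ I_N(μ)` and the quotient `I_N(μ)/I_N(λ)` is cyclic. -/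
theorem stmt6 {N : Type*} [Group N] [Finite N] (T : Subgroup N) (hT : T.Normal)
    (hTab : ∀ x y : ↥T, x * y = y * x) (δ : N →* ℂˣ)
    (hT0 : (T ⊓ δ.ker).Normal)
    (μ : ↥(T ⊓ δ.ker) →* ℂˣ) (lam : ↥T →* ℂˣ)
    (hext : ∀ (x : N) (hx : x ∈ T ⊓ δ.ker), lam ⟨x, hx.1⟩ = μ ⟨x, hx⟩)
    (hconj : ∀ n ∈ inertia (T ⊓ δ.ker) hT0 (⇑μ) 1, ∃ i : ℤ,
      ∀ (t : N) (ht : t ∈ T),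
        lam ⟨n * t * n⁻¹, hT.conj_mem t ht n⟩ = lam ⟨t, ht⟩ * δ t ^ i) :
    (∀ n ∈ inertia (T ⊓ δ.ker) hT0 (⇑μ) 1, ∀ m ∈ inertia T hT (⇑lam) 1,
        n * m * n⁻¹ ∈ inertia T hT (⇑lam) 1) ∧
      ∃ g ∈ inertia (T ⊓ δ.ker) hT0 (⇑μ) 1,
        ∀ n ∈ inertia (T ⊓ δ.ker) hT0 (⇑μ) 1,
          ∃ (k : ℤ) (m : N), m ∈ inertia T hT (⇑lam) 1 ∧ n = g ^ k * m := by
  classical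
  -- Translate `hconj` into the `Pred` predicate.
  have hconj' : ∀ n ∈ inertia (T ⊓ δ.ker) hT0 (⇑μ) 1, ∃ i : ℤ, Pred T hT δ lam n i := by
    intro n hn
    obtain ⟨i, hi⟩ := hconj n hn
    exact ⟨i, fun t => hi ↑t t.2⟩
  -- Membership in `I_N(λ)` is exactly `Pred · 0`.
  have memIl : ∀ n : N, n ∈ inertia T hT (⇑lam) 1 ↔ Pred T hT δ lam n 0 := by
    intro n
    rw [mem_inertia_iff_s6]
    constructor
    · intro h t; rw [h t, zpow_zero, mul_one]
    · intro h t; rw [h t, zpow_zero, mul_one]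
  -- `I_N(λ) ≤ I_N(μ)`.
  have hle : ∀ n : N, n ∈ inertia T hT (⇑lam) 1 → n ∈ inertia (T ⊓ δ.ker) hT0 (⇑μ) 1 := by
    intro n hn
    rw [mem_inertia_iff_s6] at hn ⊢
    intro t
    have h1 : n * ↑t * n⁻¹ ∈ T ⊓ δ.ker := hT0.conj_mem ↑t t.2 n
    have h2 : (t : N) ∈ T ⊓ δ.ker := t.2
    calc μ ⟨n * ↑t * n⁻¹, hT0.conj_mem ↑t t.2 n⟩
        = lam ⟨n * ↑t * n⁻¹, h1.1⟩ := (hext _ h1).symm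
      _ = lam ⟨↑t, h2.1⟩ := hn ⟨↑t, h2.1⟩
      _ = μ ⟨↑t, h2⟩ := hext _ h2
      _ = μ t := rfl
  constructor
  · -- normality
    intro n hn m hm
    obtain ⟨i, hPn⟩ := hconj' n hn
    have hPm : Pred T hT δ lam m 0 := (memIl m).mp hm
    have hP : Pred T hT δ lam (n * m * n⁻¹) (i + 0 + -i) := (hPn.mul hPm).mul hPn.inv
    rw [show i + 0 + -i = 0 by ring] at hP
    exact (memIl _).mpr hP
  · -- cyclic quotient
    set A : AddSubgroup ℤ :=
      { carrier := {i | ∃ n ∈ inertia (T ⊓ δ.ker) hT0 (⇑μ) 1, Pred T hT δ lam n i}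
        zero_mem' := ⟨1, one_mem _, Pred.one⟩
        add_mem' := by
          rintro i j ⟨a, ha, hpa⟩ ⟨b, hb, hpb⟩
          exact ⟨a * b, mul_mem ha hb, hpa.mul hpb⟩
        neg_mem' := by
          rintro i ⟨a, ha, hpa⟩
          exact ⟨a⁻¹, inv_mem ha, hpa.inv⟩ } with hA
    obtain ⟨k, hk⟩ := Int.subgroup_cyclic A
    have hkA : k ∈ A := by rw [hk]; exact AddSubgroup.subset_closure rfl
    obtain ⟨g, hgμ, hPg⟩ := hkA
    refine ⟨g, hgμ, ?_⟩
    intro n hn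
    obtain ⟨i, hPn⟩ := hconj' n hn
    have hiA : i ∈ A := ⟨n, hn, hPn⟩
    rw [hk, AddSubgroup.mem_closure_singleton] at hiA
    obtain ⟨q, hq⟩ := hiA
    have hq' : i = q * k := by rw [← hq]; simp [zsmul_eq_mul]
    refine ⟨q, (g ^ q)⁻¹ * n, ?_, (mul_inv_cancel_left _ _).symm⟩
    have hPm : Pred T hT δ lam ((g ^ q)⁻¹ * n) (-(q * k) + i) := (hPg.zpow q).inv.mul hPn
    rw [hq', show -(q * k) + q * k = 0 by ring] at hPm
    exact (memIl _).mpr hPm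
end
end
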